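/- Let a, b ≥ 0 with (a, b) ≠ (0, 0) and t ∈ [0, 1]. The maximum over β ∈ [0, 1] of g(β) = β² a² + (1−β²) b² + 2β√(1−β²)·a·b·t is achieved at β² = (1/2)[1 + (a² − b²)/√((a² − b²)² + 4 a² b² t²)], and the maximum value equals (a² + b² + √((a² − b²)² + 4a²b²t²))/2. -/

import Mathlib

set_option maxHeartbeats 1000000


/-- Optimal power allocation for a two-path channel with orthogonal transmit
steering vectors: the maximum over `β ∈ [0,1]` of
`g(β) = β²a² + (1−β²)b² + 2β√(1−β²)abt` is `(a² + b² + √((a²−b²)² + 4a²b²t²))/2`,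
achieved at `β² = (1/2)[1 + (a²−b²)/√((a²−b²)² + 4a²b²t²)]`. -/
theorem stmt8 (a b t : ℝ) (ha : 0 ≤ a) (hb : 0 ≤ b) (hab : (a, b) ≠ (0, 0))
    (ht : t ∈ Set.Icc (0 : ℝ) 1)
    (g : ℝ → ℝ)
    (hg : g = fun β => β^2 * a^2 + (1 - β^2) * b^2 +
      2 * β * Real.sqrt (1 - β^2) * a * b * t)
    (βopt : ℝ) (hβopt : βopt = Real.sqrt ((1/2) * (1 +
      (a^2 - b^2) / Real.sqrt ((a^2 - b^2)^2 + 4 * a^2 * b^2 * t^2)))) :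
    βopt ∈ Set.Icc (0 : ℝ) 1 ∧
    βopt^2 = (1/2) * (1 + (a^2 - b^2) / Real.sqrt ((a^2 - b^2)^2 + 4 * a^2 * b^2 * t^2)) ∧
    g βopt = (a^2 + b^2 + Real.sqrt ((a^2 - b^2)^2 + 4 * a^2 * b^2 * t^2)) / 2 ∧
    ∀ β ∈ Set.Icc (0 : ℝ) 1,
      g β ≤ (a^2 + b^2 + Real.sqrt ((a^2 - b^2)^2 + 4 * a^2 * b^2 * t^2)) / 2 := by
  obtain ⟨ht0, ht1⟩ := ht
  set D := Real.sqrt ((a^2 - b^2)^2 + 4 * a^2 * b^2 * t^2) with hD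
  have hDnn : 0 ≤ D := Real.sqrt_nonneg _
  have hD2 : D^2 = (a^2 - b^2)^2 + 4 * a^2 * b^2 * t^2 := Real.sq_sqrt (by positivity)
  have habsle : |a^2 - b^2| ≤ D := by
    rw [hD]
    calc |a^2 - b^2| = Real.sqrt ((a^2-b^2)^2) := (Real.sqrt_sq_eq_abs _).symm
    _ ≤ _ := Real.sqrt_le_sqrt (by nlinarith [sq_nonneg (a*b*t)])
  clear_value D
  have hS1 : a^2 - b^2 ≤ D := (abs_le.mp habsle).2
  have hS2 : -D ≤ a^2 - b^2 := (abs_le.mp habsle).1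
  have hratio1 : (a^2-b^2)/D ≤ 1 := by
    rcases eq_or_lt_of_le hDnn with h | h
    · simp [← h]
    · rw [div_le_one h]; exact hS1
  have hratio2 : -1 ≤ (a^2-b^2)/D := by
    rcases eq_or_lt_of_le hDnn with h | h
    · simp [← h]
    · rw [le_div_iff₀ h]; linarith
  have harg_nn : 0 ≤ (1/2) * (1 + (a^2-b^2)/D) := by linarith
  have hβ2 : βopt^2 = (1/2) * (1 + (a^2-b^2)/D) := by
    rw [hβopt]; exact Real.sq_sqrt harg_nn
  have hβnn : 0 ≤ βopt := hβopt ▸ Real.sqrt_nonneg _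
  have hβle1 : βopt ≤ 1 := by
    rw [hβopt]; exact Real.sqrt_le_one.mpr (by linarith)
  have h1mβ2 : 1 - βopt^2 = (1/2) * (1 - (a^2-b^2)/D) := by rw [hβ2]; ring
  have hmax : ∀ β ∈ Set.Icc (0:ℝ) 1, g β ≤ (a^2 + b^2 + D) / 2 := by
    intro β hβ
    obtain ⟨hβ0, hβ1⟩ := hβ
    set s := Real.sqrt (1 - β^2) with hs
    have hs2 : s^2 = 1 - β^2 := Real.sq_sqrt (by nlinarith)
    have hsnn : 0 ≤ s := Real.sqrt_nonneg _
    clear_value s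
    have hxy : (2*β^2-1)^2 + (2*β*s)^2 = 1 := by linear_combination 4*β^2 * hs2
    have hkey : (2*β^2 - 1) * (a^2 - b^2) + (2*β*s) * (2*a*b*t) ≤ D := by
      have hid : ((2*β^2-1)*(a^2-b^2) + (2*β*s)*(2*a*b*t))^2
          = (a^2-b^2)^2 + 4*a^2*b^2*t^2
            - ((2*β^2-1)*(2*a*b*t) - (2*β*s)*(a^2-b^2))^2 := by
        linear_combination ((a^2-b^2)^2 + 4*a^2*b^2*t^2) * hxy
      have h1 : ((2*β^2-1)*(a^2-b^2) + (2*β*s)*(2*a*b*t))^2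
          ≤ (a^2-b^2)^2 + 4*a^2*b^2*t^2 := by
        rw [hid]
        nlinarith [sq_nonneg ((2*β^2-1)*(2*a*b*t) - (2*β*s)*(a^2-b^2))]
      calc (2*β^2 - 1) * (a^2 - b^2) + (2*β*s) * (2*a*b*t)
          ≤ |(2*β^2-1)*(a^2-b^2) + (2*β*s)*(2*a*b*t)| := le_abs_self _
        _ = Real.sqrt (((2*β^2-1)*(a^2-b^2) + (2*β*s)*(2*a*b*t))^2) :=
            (Real.sqrt_sq_eq_abs _).symm
        _ ≤ D := by rw [hD]; exact Real.sqrt_le_sqrt h1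
    rw [hg]
    simp only
    rw [← hs]
    linarith [hkey]
  refine ⟨⟨hβnn, hβle1⟩, hβ2, ?_, hmax⟩
  rcases eq_or_lt_of_le hDnn with hD0 | hDpos
  · -- degenerate case D = 0
    have hzero : (a^2 - b^2)^2 + 4 * a^2 * b^2 * t^2 = 0 := by
      rw [← hD2, ← hD0]; ring
    have habt : a*b*t = 0 := by
      have h4 : (a*b*t)^2 ≤ 0 := by nlinarith [sq_nonneg (a^2-b^2)]
      exact sq_eq_zero_iff.mp (le_antisymm h4 (sq_nonneg _))
    have hS0 : a^2 - b^2 = 0 := by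
      have h5 : (a^2-b^2)^2 ≤ 0 := by nlinarith [sq_nonneg (a*b*t)]
      exact sq_eq_zero_iff.mp (le_antisymm h5 (sq_nonneg _))
    have hβ2' : βopt^2 = 1/2 := by rw [hβ2, hS0]; simp
    rw [hg]
    simp only
    rw [← hD0]
    linear_combination (a^2-b^2) * hβ2' + (2*βopt*Real.sqrt (1-βopt^2)) * habt
  · have hDne : D ≠ 0 := ne_of_gt hDpos
    have e1 : (1/2)*(1+(a^2-b^2)/D) * ((1/2)*(1-(a^2-b^2)/D)) = (a*b*t/D)^2 := by
      field_simp
      linear_combination hD2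
    have hβprod : βopt * Real.sqrt (1 - βopt^2) = a*b*t/D := by
      rw [h1mβ2, hβopt, ← Real.sqrt_mul harg_nn, e1,
        Real.sqrt_sq (div_nonneg (mul_nonneg (mul_nonneg ha hb) ht0) hDnn)]
    have hβ2'' : 2*D*βopt^2 = D + (a^2-b^2) := by rw [hβ2]; field_simp
    have hY' : D*(βopt*Real.sqrt (1-βopt^2)) = a*b*t := by rw [hβprod]; field_simp
    have hcalc : D * (βopt^2*a^2 + (1-βopt^2)*b^2
        + 2*βopt*Real.sqrt (1-βopt^2)*a*b*t) = D * ((a^2+b^2+D)/2) := by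
      linear_combination ((a^2-b^2)/2) * hβ2'' + (2*a*b*t) * hY' - (1/2) * hD2
    have hfin := mul_left_cancel₀ hDne hcalc
    rw [hg]
    simp only
    linarith [hfin]
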